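/- Let μ be a σ-finite measure, p a bounded variable exponent, and Ω₁, …, Ω_l pairwise disjoint measurable sets of finite positive measure on which p takes constant values p₁, …, p_l. Define the finite rank operator L f = Σ_{k=1}^l μ(Ω_k)^{-1} (∫_{Ω_k} f dμ) 1_{Ω_k} on L^{p(·)}(μ). Then the operator norm of L on L^{p(·)}(μ) is at most 2. -/

import Mathlib

open MeasureTheory Filter Topology ENNReal

/-- The contribution `|t|^{q}` to the variable-exponent modular, with the usual
convention at `q = ∞` (zero if `t ≤ 1`, infinite otherwise). -/
noncomputable def evpow (t : ℝ) (q : ℝ≥0∞) : ℝ≥0∞ :=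
  if q = ∞ then (if t ≤ 1 then 0 else ∞) else ENNReal.ofReal t ^ q.toReal

/-- The modular `∫ |f(x)/λ|^{p(x)} dμ` of a variable exponent Lebesgue space. -/
noncomputable def eModular {Ω : Type*} [MeasurableSpace Ω] (μ : Measure Ω)
    (p : Ω → ℝ≥0∞) {E : Type*} [NormedAddCommGroup E] (f : Ω → E) (lam : ℝ) : ℝ≥0∞ :=
  ∫⁻ x, evpow (‖f x‖ / lam) (p x) ∂μ

/-- The Luxemburg norm of the variable exponent Lebesgue space `L^{p(·)}(μ)`. -/
noncomputable def eVNorm {Ω : Type*} [MeasurableSpace Ω] (μ : Measure Ω)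
    (p : Ω → ℝ≥0∞) {E : Type*} [NormedAddCommGroup E] (f : Ω → E) : ℝ :=
  sInf {lam : ℝ | 0 < lam ∧ eModular μ p f lam ≤ 1}

/-- Membership in the variable exponent Lebesgue space `L^{p(·)}(μ)`. -/
def MemEVLp {Ω : Type*} [MeasurableSpace Ω] (μ : Measure Ω)
    (p : Ω → ℝ≥0∞) {E : Type*} [NormedAddCommGroup E] (f : Ω → E) : Prop :=
  AEStronglyMeasurable f μ ∧ ∃ lam : ℝ, 0 < lam ∧ eModular μ p f lam ≤ 1

/-- The variable exponent sequence space norm `‖h‖_{ℓ^{q(·)}}`. -/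
noncomputable def eSeqNorm {I : Type*} (q : I → ℝ≥0∞) {E : Type*} [NormedAddCommGroup E]
    (h : I → E) : ℝ :=
  sInf {lam : ℝ | 0 < lam ∧ ∑' i, evpow (‖h i‖ / lam) (q i) ≤ 1}


lemma jensen_aux {Ω : Type*} [MeasurableSpace Ω] (ν : Measure Ω)
    {g : Ω → ℝ≥0∞} (hg : AEMeasurable g ν) {q : ℝ} (hq : 1 ≤ q)
    (hm0 : ν Set.univ ≠ 0) (hmt : ν Set.univ ≠ ∞) :
    ν Set.univ * ((∫⁻ x, g x ∂ν) / ν Set.univ) ^ q ≤ ∫⁻ x, (g x) ^ q ∂ν := by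
  set m := ν Set.univ with hm
  set I := ∫⁻ x, g x ∂ν with hI
  rcases eq_or_lt_of_le hq with hq1 | hq1
  · rw [← hq1]
    simp only [ENNReal.rpow_one]
    rw [ENNReal.mul_div_cancel hm0 hmt]
  · -- Hölder with conjugate exponents q, q/(q-1)
    have hq0 : (0:ℝ) ≤ q := by linarith
    have hconj : q.HolderConjugate (q / (q - 1)) := (Real.holderConjugate_iff_eq_conjExponent hq1).2 rfl
    set A := ∫⁻ x, (g x) ^ q ∂ν with hA
    have hhold : I ≤ A ^ (1/q) * m ^ (1/(q/(q-1))) := by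
      have h := ENNReal.lintegral_mul_le_Lp_mul_Lq ν hconj hg
        (aemeasurable_const : AEMeasurable (fun _ => (1:ℝ≥0∞)) ν)
      simp only [Pi.mul_apply, mul_one, ENNReal.one_rpow, lintegral_one] at h
      exact h
    have hIq : I ^ q ≤ A * m ^ (q - 1) := by
      calc I ^ q ≤ (A ^ (1/q) * m ^ (1/(q/(q-1)))) ^ q :=
            ENNReal.rpow_le_rpow hhold hq0
        _ = A ^ ((1/q) * q) * m ^ ((1/(q/(q-1))) * q) := by
            rw [ENNReal.mul_rpow_of_nonneg _ _ hq0, ← ENNReal.rpow_mul, ← ENNReal.rpow_mul]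
        _ = A * m ^ (q - 1) := by
            rw [one_div_mul_cancel hconj.ne_zero, ENNReal.rpow_one]
            congr 1
            have h1 : q / (q - 1) ≠ 0 := hconj.symm.ne_zero
            field_simp
    have hmq0 : m ^ q ≠ 0 := by
      simp [ENNReal.rpow_eq_zero_iff, hm0, hmt]
    have hmqt : m ^ q ≠ ∞ := by
      simp [ENNReal.rpow_eq_top_iff, hm0, hmt]
    have hsplit : m * m ^ (q-1) = m ^ q := by
      have h := (ENNReal.rpow_add 1 (q-1) hm0 hmt).symm
      rw [ENNReal.rpow_one] at h
      rw [h]; congr 1; ring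
    calc m * (I / m) ^ q = I ^ q * (m * (m ^ q)⁻¹) := by
          rw [ENNReal.div_rpow_of_nonneg _ _ hq0, div_eq_mul_inv]; ring
      _ ≤ (A * m ^ (q-1)) * (m * (m ^ q)⁻¹) := by gcongr
      _ = A * ((m * m ^ (q-1)) * (m ^ q)⁻¹) := by ring
      _ = A := by rw [hsplit, ENNReal.mul_inv_cancel hmq0 hmqt, mul_one]

/-- The averaging operator `L f = Σ_k μ(Ω_k)⁻¹ ⟨f, 1_{Ω_k}⟩ 1_{Ω_k}` associated to pairwise
disjoint sets of finite positive measure on which the bounded exponent `p` is constant has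
operator norm at most `2` on `L^{p(·)}(μ)`. -/
theorem averaging_operator_norm_le_two
    {Ω : Type*} [MeasurableSpace Ω] (μ : Measure Ω) [SigmaFinite μ]
    (hcomp : μ.IsComplete)
    (p : Ω → ℝ≥0∞) (hpm : Measurable p) (hp1 : ∀ x, 1 ≤ p x)
    (hpbdd : ∃ C : ℝ≥0∞, C < ⊤ ∧ ∀ᵐ x ∂μ, p x ≤ C)
    (l : ℕ) (S : Fin l → Set Ω) (hmeas : ∀ k, MeasurableSet (S k))
    (hdisj : Pairwise (Function.onFun Disjoint S))
    (hfin : ∀ k, μ (S k) < ⊤) (hpos : ∀ k, 0 < μ (S k))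
    (pv : Fin l → ℝ≥0∞) (hconst : ∀ k, ∀ x ∈ S k, p x = pv k)
    (f : Ω → ℝ) (hf : MemEVLp μ p f) :
    eVNorm μ p (fun x => ∑ k, (μ (S k)).toReal⁻¹ * (∫ y in S k, f y ∂μ) *
        (S k).indicator (fun _ => (1 : ℝ)) x)
      ≤ 2 * eVNorm μ p f := by
  obtain ⟨hfm, lam0, hlam0, hmod0⟩ := hf
  obtain ⟨C, hC, hae⟩ := hpbdd
  set a : Fin l → ℝ := fun k => (μ (S k)).toReal⁻¹ * ∫ y in S k, f y ∂μ with ha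
  set L : Ω → ℝ := fun x => ∑ k, a k * (S k).indicator (fun _ => (1 : ℝ)) x with hL
  -- p x = pv k for some x in S k, and pv k properties
  have hex : ∀ k : Fin l, ∃ x ∈ S k, p x ≤ C := by
    intro k
    by_contra h
    push_neg at h
    have hsub : S k ⊆ {x | ¬ p x ≤ C} := fun x hx => not_le.mpr (h x hx)
    have h0 : μ {x | ¬ p x ≤ C} = 0 := by
      rw [ae_iff] at hae; exact hae
    exact absurd (measure_mono_null hsub h0) (hpos k).ne'
  have hpvne : ∀ k, pv k ≠ ∞ := by
    intro k
    obtain ⟨x, hx, hxC⟩ := hex k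
    rw [← hconst k x hx]
    exact (lt_of_le_of_lt hxC hC).ne
  have hpv1 : ∀ k, 1 ≤ pv k := by
    intro k
    obtain ⟨x, hx, _⟩ := hex k
    rw [← hconst k x hx]; exact hp1 x
  have hq1 : ∀ k, 1 ≤ (pv k).toReal := by
    intro k
    have := ENNReal.toReal_mono (hpvne k) (hpv1 k)
    simpa using this
  -- key modular estimate
  have key : ∀ lam : ℝ, 0 < lam → eModular μ p f lam ≤ 1 → eModular μ p L lam ≤ 1 := by
    intro lam hlam hmodf
    have hptwise : ∀ x, evpow (‖L x‖ / lam) (p x)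
        = ∑ k, (S k).indicator (fun _ => evpow (|a k| / lam) (pv k)) x := by
      intro x
      by_cases h : ∃ k, x ∈ S k
      · obtain ⟨k, hk⟩ := h
        have hLx : L x = a k := by
          show ∑ j, a j * (S j).indicator (fun _ => (1:ℝ)) x = a k
          rw [Finset.sum_eq_single k]
          · rw [Set.indicator_of_mem hk, mul_one]
          · intro j _ hjk
            rw [Set.indicator_of_notMem, mul_zero]
            exact fun hxj => (Set.disjoint_left.mp (hdisj hjk) hxj) hk
          · exact fun h => absurd (Finset.mem_univ k) h
        rw [hLx, hconst k x hk]
        rw [Finset.sum_eq_single k]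
        · rw [Set.indicator_of_mem hk, Real.norm_eq_abs]
        · intro j _ hjk
          exact Set.indicator_of_notMem
            (fun hxj => (Set.disjoint_left.mp (hdisj hjk) hxj) hk) _
        · exact fun h => absurd (Finset.mem_univ k) h
      · push_neg at h
        have hLx : L x = 0 := by
          show ∑ j, a j * (S j).indicator (fun _ => (1:ℝ)) x = 0
          apply Finset.sum_eq_zero
          intro j _
          rw [Set.indicator_of_notMem (h j), mul_zero]
        have hrhs : ∑ k, (S k).indicator
            (fun _ => evpow (|a k| / lam) (pv k)) x = 0 :=
          Finset.sum_eq_zero fun j _ => Set.indicator_of_notMem (h j) _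
        rw [hLx, hrhs]
        have hpx : p x ≠ ∞ → (0:ℝ) < (p x).toReal := fun hne =>
          lt_of_lt_of_le one_pos (by simpa using ENNReal.toReal_mono hne (hp1 x))
        simp only [norm_zero, zero_div, evpow]
        split_ifs with h1 h2
        · rfl
        · exact absurd zero_le_one h2
        · rw [ENNReal.ofReal_zero, ENNReal.zero_rpow_of_pos (hpx h1)]
    have hLe : eModular μ p L lam
        = ∑ k, μ (S k) * evpow (|a k| / lam) (pv k) := by
      rw [eModular]
      rw [lintegral_congr hptwise]
      rw [lintegral_finset_sum _ (fun k _ => (measurable_const.indicator (hmeas k)))]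
      congr 1
      ext k
      rw [lintegral_indicator_const (hmeas k)]
      ring
    rw [hLe]
    have hperk : ∀ k : Fin l, μ (S k) * evpow (|a k| / lam) (pv k)
        ≤ ∫⁻ x in S k, evpow (‖f x‖ / lam) (p x) ∂μ := by
      intro k
      set m := μ (S k) with hm
      set g : Ω → ℝ≥0∞ := fun x => ENNReal.ofReal (‖f x‖ / lam) with hg
      set I := ∫⁻ x in S k, g x ∂μ with hI
      set qk := (pv k).toReal with hqk
      have hmne0 : m ≠ 0 := (hpos k).ne'
      have hmnet : m ≠ ∞ := (hfin k).ne
      have hgm : AEMeasurable g (μ.restrict (S k)) :=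
        ((hfm.norm.aemeasurable.div_const lam).ennreal_ofReal).restrict
      have hstep1 : ENNReal.ofReal (|a k| / lam) ≤ I / m := by
        by_cases hIt : I = ∞
        · rw [hIt, ENNReal.top_div_of_ne_top hmnet]; exact le_top
        · have hnorm : ‖∫ y in S k, f y ∂μ‖
              ≤ (∫⁻ y in S k, ENNReal.ofReal ‖f y‖ ∂μ).toReal :=
            norm_integral_le_lintegral_norm f
          have hrel : ∫⁻ y in S k, ENNReal.ofReal ‖f y‖ ∂μ = ENNReal.ofReal lam * I := by
            rw [hI, ← lintegral_const_mul' _ _ ENNReal.ofReal_ne_top]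
            apply lintegral_congr
            intro y
            rw [hg, ← ENNReal.ofReal_mul hlam.le]
            congr 1
            rw [mul_comm, div_mul_cancel₀ _ hlam.ne']
          have hnorm' : ‖∫ y in S k, f y ∂μ‖ ≤ lam * I.toReal := by
            rw [hrel, ENNReal.toReal_mul, ENNReal.toReal_ofReal hlam.le] at hnorm
            exact hnorm
          have habs : |a k| ≤ m.toReal⁻¹ * (lam * I.toReal) := by
            rw [ha]
            simp only
            rw [abs_mul, abs_of_nonneg (inv_nonneg.mpr ENNReal.toReal_nonneg)]
            exact mul_le_mul_of_nonneg_left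
              (by rwa [Real.norm_eq_abs] at hnorm')
              (inv_nonneg.mpr ENNReal.toReal_nonneg)
          have hdivlam : |a k| / lam ≤ I.toReal / m.toReal := by
            rw [div_le_div_iff₀ hlam (ENNReal.toReal_pos hmne0 hmnet)]
            calc |a k| * m.toReal ≤ (m.toReal⁻¹ * (lam * I.toReal)) * m.toReal :=
                  mul_le_mul_of_nonneg_right habs ENNReal.toReal_nonneg
              _ = I.toReal * lam * (m.toReal⁻¹ * m.toReal) := by ring
              _ = I.toReal * lam := by
                  rw [inv_mul_cancel₀ (ENNReal.toReal_pos hmne0 hmnet).ne', mul_one]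
          calc ENNReal.ofReal (|a k| / lam) ≤ ENNReal.ofReal (I.toReal / m.toReal) :=
                ENNReal.ofReal_le_ofReal hdivlam
            _ = ENNReal.ofReal I.toReal / ENNReal.ofReal m.toReal :=
                ENNReal.ofReal_div_of_pos (ENNReal.toReal_pos hmne0 hmnet)
            _ = I / m := by rw [ENNReal.ofReal_toReal hIt, ENNReal.ofReal_toReal hmnet]
      have hqk0 : (0:ℝ) ≤ qk := le_trans zero_le_one (hq1 k)
      calc m * evpow (|a k| / lam) (pv k)
          = m * (ENNReal.ofReal (|a k| / lam)) ^ qk := by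
            rw [evpow, if_neg (hpvne k)]
        _ ≤ m * (I / m) ^ qk :=
            mul_le_mul_right (ENNReal.rpow_le_rpow hstep1 hqk0) m
        _ ≤ ∫⁻ x in S k, g x ^ qk ∂μ := by
            have hj := jensen_aux (μ.restrict (S k)) hgm (hq1 k)
              (by rwa [Measure.restrict_apply_univ])
              (by rwa [Measure.restrict_apply_univ])
            rwa [Measure.restrict_apply_univ] at hj
        _ = ∫⁻ x in S k, evpow (‖f x‖ / lam) (p x) ∂μ := by
            apply setLIntegral_congr_fun (hmeas k)
            intro x hx
            beta_reduce
            rw [hconst k x hx, evpow, if_neg (hpvne k)]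
    calc ∑ k, μ (S k) * evpow (|a k| / lam) (pv k)
        ≤ ∑ k, ∫⁻ x in S k, evpow (‖f x‖ / lam) (p x) ∂μ :=
          Finset.sum_le_sum fun k _ => hperk k
      _ = ∫⁻ x in ⋃ k ∈ Finset.univ, S k, evpow (‖f x‖ / lam) (p x) ∂μ := by
          rw [lintegral_biUnion_finset
            (fun i _ j _ hij => hdisj hij) (fun k _ => hmeas k)]
      _ ≤ eModular μ p f lam := setLIntegral_le_lintegral _ _
      _ ≤ 1 := hmodf
  -- conclude
  have hsub : {lam : ℝ | 0 < lam ∧ eModular μ p f lam ≤ 1}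
      ⊆ {lam : ℝ | 0 < lam ∧ eModular μ p L lam ≤ 1} :=
    fun lam hlam => ⟨hlam.1, key lam hlam.1 hlam.2⟩
  have h1 : eVNorm μ p L ≤ eVNorm μ p f :=
    csInf_le_csInf ⟨0, fun x hx => hx.1.le⟩ ⟨lam0, hlam0, hmod0⟩ hsub
  have h2 : 0 ≤ eVNorm μ p f := Real.sInf_nonneg fun x hx => hx.1.le
  have h3 : eVNorm μ p L = eVNorm μ p (fun x => ∑ k, (μ (S k)).toReal⁻¹ *
      (∫ y in S k, f y ∂μ) * (S k).indicator (fun _ => (1 : ℝ)) x) := rfl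
  linarith [h3 ▸ h1]
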